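/- For n×n Hermitian matrices A and B with empirical spectral distribution functions F_A, F_B, the Lévy distance satisfies L(F_A, F_B)³ ≤ (1/n)·‖A−B‖_F². -/

import Mathlib

open Matrix Finset

lemma lemA {n : ℕ} (f g : Fin n → ℝ) (σ : Equiv.Perm (Fin n)) :
    ∑ i, f i * g (σ i) ≤ ∑ i, (f ∘ Tuple.sort f) i * (g ∘ Tuple.sort g) i := by
  set τf := Tuple.sort f
  set τg := Tuple.sort g
  have h1 : ∑ i, f i * g (σ i) = ∑ i, (f ∘ τf) i * (g ∘ τg) ((τg⁻¹ * (σ * τf)) i) := by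
    rw [← Equiv.sum_comp τf (fun i => f i * g (σ i))]
    simp [Function.comp, mul_assoc]
  rw [h1]
  exact ((Tuple.monotone_sort f).monovary (Tuple.monotone_sort g)).sum_mul_comp_perm_le_sum_mul

lemma lemPerm {n : ℕ} (f g : Fin n → ℝ) (σ : Equiv.Perm (Fin n)) :
    ∑ i, ∑ j, f i * g j * (σ.permMatrix ℝ) i j = ∑ i, f i * g (σ i) := by
  refine Finset.sum_congr rfl fun i _ => ?_
  rw [Finset.sum_eq_single (σ i)]
  · simp [Equiv.Perm.permMatrix, PEquiv.toMatrix_apply, Equiv.toPEquiv_apply]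
  · intro j _ hj
    simp only [Equiv.Perm.permMatrix, PEquiv.toMatrix_apply, Equiv.toPEquiv_apply, Option.mem_def,
      Option.some.injEq]
    rw [if_neg (fun h => hj h.symm), mul_zero]
  · simp

lemma lemB {n : ℕ} (f g : Fin n → ℝ) (s : Matrix (Fin n) (Fin n) ℝ)
    (hs : s ∈ doublyStochastic ℝ (Fin n)) :
    ∑ i, ∑ j, f i * g j * s i j ≤ ∑ i, (f ∘ Tuple.sort f) i * (g ∘ Tuple.sort g) i := by
  obtain ⟨w, hw0, hw1, hws⟩ := exists_eq_sum_perm_of_mem_doublyStochastic hs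
  have key : ∑ i, ∑ j, f i * g j * s i j = ∑ σ : Equiv.Perm (Fin n), w σ * ∑ i, f i * g (σ i) := by
    rw [← hws]
    calc ∑ i, ∑ j, f i * g j * (∑ σ : Equiv.Perm (Fin n), w σ • σ.permMatrix ℝ) i j
        = ∑ i, ∑ j, ∑ σ : Equiv.Perm (Fin n), w σ * (f i * g j * (σ.permMatrix ℝ) i j) := by
          refine Finset.sum_congr rfl fun i _ => Finset.sum_congr rfl fun j _ => ?_
          simp only [Matrix.sum_apply, Matrix.smul_apply, smul_eq_mul, Finset.mul_sum]
          refine Finset.sum_congr rfl fun σ _ => by ring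
      _ = ∑ i, ∑ σ : Equiv.Perm (Fin n), ∑ j, w σ * (f i * g j * (σ.permMatrix ℝ) i j) :=
          Finset.sum_congr rfl fun i _ => Finset.sum_comm
      _ = ∑ σ : Equiv.Perm (Fin n), ∑ i, ∑ j, w σ * (f i * g j * (σ.permMatrix ℝ) i j) :=
          Finset.sum_comm
      _ = ∑ σ : Equiv.Perm (Fin n), w σ * ∑ i, f i * g (σ i) := by
          refine Finset.sum_congr rfl fun σ _ => ?_
          rw [← lemPerm f g σ, Finset.mul_sum]
          exact Finset.sum_congr rfl fun i _ => (Finset.mul_sum _ _ _).symm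
  rw [key]
  calc ∑ σ : Equiv.Perm (Fin n), w σ * ∑ i, f i * g (σ i)
      ≤ ∑ σ : Equiv.Perm (Fin n), w σ * ∑ i, (f ∘ Tuple.sort f) i * (g ∘ Tuple.sort g) i :=
        Finset.sum_le_sum fun σ _ => mul_le_mul_of_nonneg_left (lemA f g σ) (hw0 σ)
    _ = _ := by rw [← Finset.sum_mul, hw1, one_mul]

lemma lemD {n : ℕ} (W : Matrix (Fin n) (Fin n) ℂ) (hW : W ∈ Matrix.unitaryGroup (Fin n) ℂ) :
    Matrix.of (fun i j => ‖W i j‖ ^ 2) ∈ doublyStochastic ℝ (Fin n) := by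
  rw [mem_doublyStochastic_iff_sum]
  have h1 : W * star W = 1 := Matrix.mem_unitaryGroup_iff.mp hW
  have h2 : star W * W = 1 := Matrix.mem_unitaryGroup_iff'.mp hW
  simp only [Matrix.of_apply]
  refine ⟨fun i j => by positivity, fun i => ?_, fun j => ?_⟩
  · have := congrFun (congrFun h1 i) i
    rw [Matrix.mul_apply] at this
    simp only [Matrix.one_apply_eq] at this
    have : ((∑ j, ‖W i j‖ ^ 2 : ℝ) : ℂ) = 1 := by
      rw [← this]
      push_cast
      refine Finset.sum_congr rfl fun j _ => ?_
      rw [Matrix.star_apply, Complex.star_def, Complex.mul_conj]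
      norm_cast
      rw [Complex.normSq_eq_norm_sq]
    exact_mod_cast this
  · have := congrFun (congrFun h2 j) j
    rw [Matrix.mul_apply] at this
    simp only [Matrix.one_apply_eq] at this
    have : ((∑ i, ‖W i j‖ ^ 2 : ℝ) : ℂ) = 1 := by
      rw [← this]
      push_cast
      refine Finset.sum_congr rfl fun i _ => ?_
      rw [Matrix.star_apply, Complex.star_def, mul_comm, Complex.mul_conj]
      norm_cast
      rw [Complex.normSq_eq_norm_sq]
    exact_mod_cast this

lemma lemC {n : ℕ} (A B : Matrix (Fin n) (Fin n) ℂ)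
    (hA : A.IsHermitian) (hB : B.IsHermitian) :
    trace (A * B) = ((∑ i, ∑ j, hA.eigenvalues i * hB.eigenvalues j *
      ‖(star (hA.eigenvectorUnitary : Matrix (Fin n) (Fin n) ℂ) *
        (hB.eigenvectorUnitary : Matrix (Fin n) (Fin n) ℂ)) i j‖ ^ 2 : ℝ) : ℂ) := by
  set U : Matrix (Fin n) (Fin n) ℂ := (hA.eigenvectorUnitary : Matrix (Fin n) (Fin n) ℂ)
  set V : Matrix (Fin n) (Fin n) ℂ := (hB.eigenvectorUnitary : Matrix (Fin n) (Fin n) ℂ)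
  set W := star U * V with hW
  have hUu : U ∈ Matrix.unitaryGroup (Fin n) ℂ := hA.eigenvectorUnitary.2
  have hVu : V ∈ Matrix.unitaryGroup (Fin n) ℂ := hB.eigenvectorUnitary.2
  have hstarW : star W = star V * U := by
    rw [hW, StarMul.star_mul, star_star]
  set D1 := diagonal (RCLike.ofReal ∘ hA.eigenvalues : Fin n → ℂ) with hD1
  set D2 := diagonal (RCLike.ofReal ∘ hB.eigenvalues : Fin n → ℂ) with hD2
  have key : trace (A * B) = trace (D1 * (W * (D2 * star W))) := by
    rw [hW, hstarW]
    conv_lhs => rw [hA.spectral_theorem, hB.spectral_theorem, Unitary.conjStarAlgAut_apply,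
      Unitary.conjStarAlgAut_apply]
    rw [show (U * D1 * star U) * (V * D2 * star V)
        = U * (D1 * (star U * (V * (D2 * (star V))))) by simp only [Matrix.mul_assoc]]
    rw [trace_mul_comm]
    simp only [Matrix.mul_assoc]
  rw [key]
  have entry : ∀ i, (D1 * (W * (D2 * star W))) i i
      = ∑ j, (hA.eigenvalues i : ℂ) * (hB.eigenvalues j : ℂ) * (W i j * star (W i j)) := by
    intro i
    rw [hD1, diagonal_mul, Matrix.mul_apply, Finset.mul_sum]
    refine Finset.sum_congr rfl fun j _ => ?_
    rw [hD2, diagonal_mul, Matrix.star_apply]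
    simp [Function.comp]
    ring
  rw [Matrix.trace]
  push_cast
  refine Finset.sum_congr rfl fun i _ => ?_
  rw [Matrix.diag_apply, entry i]
  refine Finset.sum_congr rfl fun j _ => ?_
  rw [show W i j * star (W i j) = ((‖W i j‖^2 : ℝ) : ℂ) from by
    rw [Complex.star_def, Complex.mul_conj]; norm_cast;
    rw [Complex.normSq_eq_norm_sq]]
  push_cast
  ring

lemma trace_sq {n : ℕ} (A : Matrix (Fin n) (Fin n) ℂ) (hA : A.IsHermitian) :
    trace (A * A) = ((∑ i, hA.eigenvalues i ^ 2 : ℝ) : ℂ) := by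
  have h1 : star (hA.eigenvectorUnitary : Matrix (Fin n) (Fin n) ℂ) *
      (hA.eigenvectorUnitary : Matrix (Fin n) (Fin n) ℂ) = 1 :=
    Matrix.mem_unitaryGroup_iff'.mp hA.eigenvectorUnitary.2
  rw [lemC A A hA hA, h1]
  norm_cast
  refine Finset.sum_congr rfl fun i _ => ?_
  rw [Finset.sum_eq_single i]
  · simp [Matrix.one_apply_eq]; ring
  · intro j _ hj
    simp [Matrix.one_apply_ne' hj]
  · simp

lemma frob_eq_trace {n : ℕ} (M : Matrix (Fin n) (Fin n) ℂ) (hM : M.IsHermitian) :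
    trace (M * M) = ((∑ i, ∑ j, ‖M i j‖ ^ 2 : ℝ) : ℂ) := by
  rw [Matrix.trace]
  push_cast
  refine Finset.sum_congr rfl fun i _ => ?_
  rw [Matrix.diag_apply, Matrix.mul_apply]
  refine Finset.sum_congr rfl fun j _ => ?_
  rw [show M j i = star (M i j) from (hM.apply j i).symm, Complex.star_def, Complex.mul_conj]
  norm_cast
  rw [Complex.normSq_eq_norm_sq]

lemma lemE {n : ℕ} (A B : Matrix (Fin n) (Fin n) ℂ)
    (hA : A.IsHermitian) (hB : B.IsHermitian) :
    ∑ i, ((hA.eigenvalues ∘ Tuple.sort hA.eigenvalues) i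
        - (hB.eigenvalues ∘ Tuple.sort hB.eigenvalues) i) ^ 2
      ≤ ∑ i, ∑ j, ‖(A - B) i j‖ ^ 2 := by
  set f := hA.eigenvalues
  set g := hB.eigenvalues
  set U : Matrix (Fin n) (Fin n) ℂ := (hA.eigenvectorUnitary : Matrix (Fin n) (Fin n) ℂ)
  set V : Matrix (Fin n) (Fin n) ℂ := (hB.eigenvectorUnitary : Matrix (Fin n) (Fin n) ℂ)
  set W := star U * V with hWdef
  have hWu : W ∈ Matrix.unitaryGroup (Fin n) ℂ :=
    mul_mem (Unitary.star_mem hA.eigenvectorUnitary.2) hB.eigenvectorUnitary.2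
  set S : ℝ := ∑ i, ∑ j, f i * g j * ‖W i j‖ ^ 2 with hS
  -- complex trace identity
  have hM : (A - B).IsHermitian := hA.sub hB
  have hexp : (A - B) * (A - B) = A * A - A * B - B * A + B * B := by noncomm_ring
  have htr : trace ((A - B) * (A - B))
      = trace (A * A) + trace (B * B) - 2 * trace (A * B) := by
    rw [hexp, trace_add, trace_sub, trace_sub, trace_mul_comm B A]
    ring
  have hreal : ∑ i, ∑ j, ‖(A - B) i j‖ ^ 2 = ∑ i, f i ^ 2 + ∑ i, g i ^ 2 - 2 * S := by
    have hc : ((∑ i, ∑ j, ‖(A - B) i j‖ ^ 2 : ℝ) : ℂ)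
        = ((∑ i, f i ^ 2 + ∑ i, g i ^ 2 - 2 * S : ℝ) : ℂ) := by
      rw [← frob_eq_trace _ hM, htr, trace_sq A hA, trace_sq B hB, lemC A B hA hB, hS]
      push_cast
      ring
    exact_mod_cast hc
  have hSle : S ≤ ∑ i, (f ∘ Tuple.sort f) i * (g ∘ Tuple.sort g) i := by
    have := lemB f g (Matrix.of fun i j => ‖W i j‖ ^ 2) (lemD W hWu)
    simpa [hS] using this
  have hf2 : ∑ i, (f ∘ Tuple.sort f) i ^ 2 = ∑ i, f i ^ 2 :=
    Equiv.sum_comp (Tuple.sort f) (fun i => f i ^ 2)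
  have hg2 : ∑ i, (g ∘ Tuple.sort g) i ^ 2 = ∑ i, g i ^ 2 :=
    Equiv.sum_comp (Tuple.sort g) (fun i => g i ^ 2)
  have expand : ∑ i, ((f ∘ Tuple.sort f) i - (g ∘ Tuple.sort g) i) ^ 2
      = ∑ i, (f ∘ Tuple.sort f) i ^ 2 + ∑ i, (g ∘ Tuple.sort g) i ^ 2
        - 2 * ∑ i, (f ∘ Tuple.sort f) i * (g ∘ Tuple.sort g) i := by
    rw [Finset.mul_sum, ← Finset.sum_add_distrib, ← Finset.sum_sub_distrib]
    exact Finset.sum_congr rfl fun i _ => by ring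
  rw [hreal, expand, hf2, hg2]
  linarith

-- L1: for monotone F, the filter is an initial segment
lemma lemL1 {n : ℕ} {F : Fin n → ℝ} (hF : Monotone F) (y : ℝ) (i : Fin n) :
    i ∈ univ.filter (fun j => F j ≤ y) ↔ i.val < (univ.filter (fun j => F j ≤ y)).card := by
  set S := univ.filter (fun j => F j ≤ y) with hS
  constructor
  · intro hi
    have hsub : Finset.Iic i ⊆ S := by
      intro j hj
      rw [Finset.mem_Iic] at hj
      rw [hS, Finset.mem_filter]
      exact ⟨Finset.mem_univ _, le_trans (hF hj) (Finset.mem_filter.mp hi).2⟩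
    have := Finset.card_le_card hsub
    rw [Fin.card_Iic] at this
    omega
  · intro hi
    by_contra hni
    have hsub : S ⊆ Finset.Iio i := by
      intro j hj
      rw [Finset.mem_Iio]
      by_contra hji
      push_neg at hji
      exact hni (Finset.mem_filter.mpr ⟨Finset.mem_univ _,
        le_trans (hF hji) (Finset.mem_filter.mp hj).2⟩)
    have := Finset.card_le_card hsub
    rw [Fin.card_Iio] at this
    omega

-- L2: counting lemma
lemma lemL2 {n : ℕ} {F G : Fin n → ℝ} (hF : Monotone F) (hG : Monotone G)
    {ε : ℝ} (hε : 0 < ε) (x : ℝ) :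
    ((univ.filter fun i => F i ≤ x - ε).card : ℝ)
      ≤ (univ.filter fun i => G i ≤ x).card + (∑ i, (F i - G i) ^ 2) / ε ^ 2 := by
  set k := (univ.filter fun i => F i ≤ x - ε).card with hk
  set m := (univ.filter fun i => G i ≤ x).card with hm
  have hsq : 0 ≤ (∑ i, (F i - G i) ^ 2) / ε ^ 2 := by positivity
  rcases le_or_gt k m with h | h
  · calc (k : ℝ) ≤ m := by exact_mod_cast h
      _ ≤ _ := le_add_of_nonneg_right hsq
  · -- m < k
    have hkn : k ≤ n := le_trans (Finset.card_filter_le _ _) (by simp)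
    set T := univ.filter (fun i : Fin n => m ≤ i.val ∧ i.val < k) with hT
    have hTcard : T.card = k - m := by
      rw [hT]
      rw [show (univ.filter (fun i : Fin n => m ≤ i.val ∧ i.val < k))
          = (Finset.Ico m k).attachFin (fun c hc => lt_of_lt_of_le (Finset.mem_Ico.mp hc).2 hkn)
          from ?_]
      · rw [Finset.card_attachFin, Nat.card_Ico]
      · ext i
        simp [Finset.mem_attachFin, Finset.mem_Ico]
    have hbound : ∀ i ∈ T, ε ^ 2 ≤ (F i - G i) ^ 2 := by
      intro i hi
      rw [hT, Finset.mem_filter] at hi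
      obtain ⟨-, him, hik⟩ := hi
      have hFi : F i ≤ x - ε :=
        (Finset.mem_filter.mp ((lemL1 hF (x - ε) i).mpr (by rw [← hk]; exact hik))).2
      have hGi : x < G i := by
        by_contra hle
        push_neg at hle
        have : i.val < m := by
          rw [hm]; exact (lemL1 hG x i).mp (Finset.mem_filter.mpr ⟨Finset.mem_univ _, hle⟩)
        omega
      have : ε ≤ G i - F i := by linarith
      calc ε ^ 2 ≤ (G i - F i) ^ 2 := pow_le_pow_left₀ hε.le this 2
        _ = (F i - G i) ^ 2 := by ring
    have hsum : (T.card : ℝ) * ε ^ 2 ≤ ∑ i, (F i - G i) ^ 2 := by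
      calc (T.card : ℝ) * ε ^ 2 = ∑ _i ∈ T, ε ^ 2 := by rw [Finset.sum_const, nsmul_eq_mul]
        _ ≤ ∑ i ∈ T, (F i - G i) ^ 2 := Finset.sum_le_sum hbound
        _ ≤ ∑ i, (F i - G i) ^ 2 :=
            Finset.sum_le_sum_of_subset_of_nonneg (Finset.subset_univ _)
              (fun i _ _ => sq_nonneg _)
    rw [hTcard] at hsum
    have hcast : ((k - m : ℕ) : ℝ) = (k : ℝ) - m := by
      rw [Nat.cast_sub h.le]
    rw [hcast] at hsum
    have hε2 : (0:ℝ) < ε ^ 2 := by positivity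
    rw [← sub_le_iff_le_add', le_div_iff₀ hε2]
    exact hsum

-- L3: filter card invariant under permutation
lemma lemL3 {n : ℕ} (f : Fin n → ℝ) (σ : Equiv.Perm (Fin n)) (x : ℝ) :
    (univ.filter fun i => f (σ i) ≤ x).card = (univ.filter fun i => f i ≤ x).card := by
  apply Finset.card_bij (fun i _ => σ i)
  · intro i hi
    rw [Finset.mem_filter] at hi ⊢
    exact ⟨Finset.mem_univ _, hi.2⟩
  · intro i _ j _ hij
    exact σ.injective hij
  · intro j hj
    rw [Finset.mem_filter] at hj
    exact ⟨σ⁻¹ j, Finset.mem_filter.mpr ⟨Finset.mem_univ _, by simpa using hj.2⟩, by simp⟩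

/-- Distribution function of the empirical spectral distribution of a Hermitian matrix. -/
noncomputable def specDistFun {n : ℕ} {A : Matrix (Fin n) (Fin n) ℂ}
    (hA : A.IsHermitian) (x : ℝ) : ℝ :=
  ((Finset.univ.filter fun i => hA.eigenvalues i ≤ x).card : ℝ) / n

/-- The Lévy distance between two distribution functions. -/
noncomputable def levyDist (F G : ℝ → ℝ) : ℝ :=
  sInf {ε : ℝ | 0 < ε ∧ ∀ x, F (x - ε) - ε ≤ G x ∧ G x ≤ F (x + ε) + ε}

theorem levy_dist_le_frobenius {n : ℕ} (A B : Matrix (Fin n) (Fin n) ℂ)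
    (hA : A.IsHermitian) (hB : B.IsHermitian) :
    (levyDist (specDistFun hA) (specDistFun hB)) ^ 3 ≤
      (1 / (n : ℝ)) * ∑ i, ∑ j, ‖(A - B) i j‖ ^ 2 := by
  set f := hA.eigenvalues with hf
  set g := hB.eigenvalues with hg
  set F := f ∘ Tuple.sort f with hFdef
  set G := g ∘ Tuple.sort g with hGdef
  have hFmono : Monotone F := Tuple.monotone_sort f
  have hGmono : Monotone G := Tuple.monotone_sort g
  have hFA : ∀ x, specDistFun hA x = ((univ.filter fun i => F i ≤ x).card : ℝ) / n := by
    intro x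
    rw [specDistFun]
    congr 2
    exact (lemL3 f (Tuple.sort f) x).symm
  have hFB : ∀ x, specDistFun hB x = ((univ.filter fun i => G i ≤ x).card : ℝ) / n := by
    intro x
    rw [specDistFun]
    congr 2
    exact (lemL3 g (Tuple.sort g) x).symm
  have hRHS : 0 ≤ (1 / (n : ℝ)) * ∑ i, ∑ j, ‖(A - B) i j‖ ^ 2 := by positivity
  by_cases hD0 : ∑ i, (F i - G i) ^ 2 = 0
  · -- degenerate case: equal sorted spectra
    have hFG : specDistFun hA = specDistFun hB := by
      have hFGfun : ∀ i, F i = G i := by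
        intro i
        have := (Finset.sum_eq_zero_iff_of_nonneg (fun i _ => sq_nonneg (F i - G i))).mp hD0
          i (Finset.mem_univ i)
        have := pow_eq_zero_iff (n := 2) (by norm_num) |>.mp this
        linarith [sub_eq_zero.mp this]
      funext x
      rw [hFA, hFB]
      congr 2
      exact congrArg Finset.card (Finset.filter_congr fun i _ => by rw [hFGfun i])
    have hmono : Monotone (specDistFun hA) := by
      intro x y hxy
      rw [hFA, hFA]
      have hsub : (univ.filter fun i => F i ≤ x) ⊆ (univ.filter fun i => F i ≤ y) := by
        intro i hi
        rw [Finset.mem_filter] at hi ⊢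
        exact ⟨hi.1, hi.2.trans hxy⟩
      have : ((univ.filter fun i => F i ≤ x).card : ℝ) ≤ (univ.filter fun i => F i ≤ y).card := by
        exact_mod_cast Finset.card_le_card hsub
      rw [div_eq_mul_inv, div_eq_mul_inv]
      exact mul_le_mul_of_nonneg_right this (by positivity)
    have hset : {ε : ℝ | 0 < ε ∧ ∀ x, specDistFun hA (x - ε) - ε ≤ specDistFun hB x ∧
        specDistFun hB x ≤ specDistFun hA (x + ε) + ε} = Set.Ioi 0 := by
      ext ε
      constructor
      · exact fun h => h.1
      · intro (hε : 0 < ε)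
        refine ⟨hε, fun x => ⟨?_, ?_⟩⟩
        · rw [← hFG]
          have := hmono (show x - ε ≤ x by linarith)
          linarith
        · rw [← hFG]
          have := hmono (show x ≤ x + ε by linarith)
          linarith
    rw [levyDist, hset, csInf_Ioi]
    simpa using hRHS
  · -- main case
    have hn : 0 < n := by
      rcases Nat.eq_zero_or_pos n with h | h
      · exfalso; apply hD0; subst h; simp
      · exact h
    have hnR : (0:ℝ) < n := by exact_mod_cast hn
    have hsum_pos : 0 < ∑ i, (F i - G i) ^ 2 :=
      lt_of_le_of_ne (Finset.sum_nonneg fun i _ => sq_nonneg _) (Ne.symm hD0)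
    set D := (1 / (n:ℝ)) * ∑ i, (F i - G i) ^ 2 with hD
    have hDpos : 0 < D := by positivity
    set ε := D ^ ((3:ℝ)⁻¹) with hε
    have hεpos : 0 < ε := Real.rpow_pos_of_pos hDpos _
    have hε3 : ε ^ 3 = D := by
      rw [hε, ← Real.rpow_natCast (D ^ ((3:ℝ)⁻¹)) 3, ← Real.rpow_mul hDpos.le]
      norm_num
    have hSig : (∑ i, (F i - G i) ^ 2) / ε ^ 2 = n * ε := by
      have : ∑ i, (F i - G i) ^ 2 = n * D := by
        rw [hD]; field_simp
      rw [this, ← hε3]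
      field_simp
    have hmem : ε ∈ {ε : ℝ | 0 < ε ∧ ∀ x, specDistFun hA (x - ε) - ε ≤ specDistFun hB x ∧
        specDistFun hB x ≤ specDistFun hA (x + ε) + ε} := by
      refine ⟨hεpos, fun x => ⟨?_, ?_⟩⟩
      · rw [hFA, hFB]
        have h1 := lemL2 hFmono hGmono hεpos x
        rw [hSig] at h1
        rw [sub_le_iff_le_add, div_le_iff₀ hnR] at *
        calc ((univ.filter fun i => F i ≤ x - ε).card : ℝ)
            ≤ (univ.filter fun i => G i ≤ x).card + n * ε := h1
          _ = ((univ.filter fun i => G i ≤ x).card / n + ε) * n := by field_simp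
      · rw [hFA, hFB]
        have h1 := lemL2 hGmono hFmono hεpos (x + ε)
        rw [add_sub_cancel_right] at h1
        have h2 : (∑ i, (G i - F i) ^ 2) / ε ^ 2 = n * ε := by
          rw [← hSig]
          congr 1
          exact Finset.sum_congr rfl fun i _ => by ring
        rw [h2] at h1
        rw [div_le_iff₀ hnR]
        calc ((univ.filter fun i => G i ≤ x).card : ℝ)
            ≤ (univ.filter fun i => F i ≤ x + ε).card + n * ε := h1
          _ = ((univ.filter fun i => F i ≤ x + ε).card / n + ε) * n := by field_simp
    have hbdd : BddBelow {ε : ℝ | 0 < ε ∧ ∀ x, specDistFun hA (x - ε) - ε ≤ specDistFun hB x ∧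
        specDistFun hB x ≤ specDistFun hA (x + ε) + ε} := ⟨0, fun y hy => hy.1.le⟩
    have hL_le : levyDist (specDistFun hA) (specDistFun hB) ≤ ε := csInf_le hbdd hmem
    have hL_nonneg : 0 ≤ levyDist (specDistFun hA) (specDistFun hB) :=
      le_csInf ⟨ε, hmem⟩ fun y hy => hy.1.le
    calc (levyDist (specDistFun hA) (specDistFun hB)) ^ 3
        ≤ ε ^ 3 := pow_le_pow_left₀ hL_nonneg hL_le 3
      _ = D := hε3
      _ ≤ (1 / (n : ℝ)) * ∑ i, ∑ j, ‖(A - B) i j‖ ^ 2 := by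
          rw [hD]
          exact mul_le_mul_of_nonneg_left (lemE A B hA hB) (by positivity)
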